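/- arXiv:2406.04889 — 3 statements merged into one kernel-verified Lean document; each statement's English description precedes it below -/
import Mathlib

section
/- If (u⋆, d⋆) is an optimal clearing with net position ω₀ > 0 and there exists a feasible u with Σ u(n) = ω₀ (i.e., the target is attainable by upward bids alone), then d⋆ = 0, i.e., no downward bids are cleared. (Part of Lemma 1 of the paper.) -/
open Finset

/-- In the abstract market clearing with positive upward prices c^u,
positive downward prices c^d satisfying max c^d < min c^u, if (u⋆, d⋆) is an
optimal clearing with net position ω₀ > 0 and the target is attainable by upward
bids alone, then no downward bids are cleared: d⋆ = 0. -/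
theorem no_downward_cleared {U D : Type*} [Fintype U] [Fintype D]
    (cu : U → ℝ) (cd : D → ℝ) (umax : U → ℝ) (dmax : D → ℝ)
    (hcu : ∀ n, 0 < cu n) (hcd : ∀ n, 0 < cd n)
    (humax : ∀ n, 0 ≤ umax n) (hdmax : ∀ n, 0 ≤ dmax n)
    (hprice : ∀ (n : U) (k : D), cd k < cu n)
    (ω₀ : ℝ) (hω₀ : 0 < ω₀)
    (ustar : U → ℝ) (dstar : D → ℝ)
    (hufeas : ∀ n, 0 ≤ ustar n ∧ ustar n ≤ umax n)
    (hdfeas : ∀ n, 0 ≤ dstar n ∧ dstar n ≤ dmax n)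
    (hω : ∑ n, ustar n - ∑ n, dstar n = ω₀)
    (hopt : ∀ (u : U → ℝ) (d : D → ℝ),
      (∀ n, 0 ≤ u n ∧ u n ≤ umax n) → (∀ n, 0 ≤ d n ∧ d n ≤ dmax n) →
      ∑ n, u n - ∑ n, d n = ω₀ →
      ∑ n, cu n * ustar n - ∑ n, cd n * dstar n ≤
        ∑ n, cu n * u n - ∑ n, cd n * d n)
    (hattain : ∃ u : U → ℝ, (∀ n, 0 ≤ u n ∧ u n ≤ umax n) ∧ ∑ n, u n = ω₀) :
    dstar = 0 := by
  by_contra h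
  obtain ⟨k0, hk0⟩ := Function.ne_iff.mp h
  have hk0pos : 0 < dstar k0 := lt_of_le_of_ne (hdfeas k0).1 (Ne.symm hk0)
  set S := ∑ n, ustar n with hS
  set Sd := ∑ n, dstar n with hSd
  have hSdpos : 0 < Sd := by
    have := Finset.single_le_sum (f := dstar) (fun n _ => (hdfeas n).1) (mem_univ k0)
    linarith
  have hSpos : 0 < S := by linarith [hω]
  -- U is nonempty
  have hUne : Nonempty U := by
    by_contra hU
    simp only [not_nonempty_iff] at hU
    have : S = 0 := by simp [hS]
    linarith
  -- min of cu
  obtain ⟨n0, _, hn0⟩ := Finset.exists_min_image (univ : Finset U) cu (univ_nonempty)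
  set cmin := cu n0 with hcmin
  have hcdlt : ∀ k, cd k < cmin := fun k => hprice n0 k
  -- the scaled alternative
  set t := ω₀ / S with ht
  have htpos : 0 < t := div_pos hω₀ hSpos
  have htlt : t < 1 := by
    rw [ht, div_lt_one hSpos]; linarith
  have hufeas' : ∀ n, 0 ≤ t * ustar n ∧ t * ustar n ≤ umax n := by
    intro n
    constructor
    · exact mul_nonneg htpos.le (hufeas n).1
    · calc t * ustar n ≤ 1 * ustar n :=
            mul_le_mul_of_nonneg_right htlt.le (hufeas n).1
        _ = ustar n := one_mul _
        _ ≤ umax n := (hufeas n).2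
  have hdfeas' : ∀ k : D, 0 ≤ (0 : ℝ) ∧ (0 : ℝ) ≤ dmax k := fun k => ⟨le_refl _, hdmax k⟩
  have hnet : ∑ n, t * ustar n - ∑ _k : D, (0 : ℝ) = ω₀ := by
    rw [← Finset.mul_sum]
    simp [ht, hSpos.ne']
    rw [← hS]; exact div_mul_cancel₀ ω₀ hSpos.ne'
  have hkey := hopt (fun n => t * ustar n) (fun _ => 0) hufeas' hdfeas' hnet
  have hkey2 : ∑ n, cd n * dstar n ≥ (1 - t) * ∑ n, cu n * ustar n := by
    have : ∑ n, cu n * (t * ustar n) = t * ∑ n, cu n * ustar n := by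
      rw [Finset.mul_sum]; congr 1; ext n; ring
    simp only [mul_zero, Finset.sum_const_zero, sub_zero] at hkey
    rw [this] at hkey
    nlinarith [hkey]
  -- lower bound: (1-t) * Σ cu ustar ≥ cmin * Sd
  have h1t : (1 - t) * S = Sd := by
    field_simp [ht]
    rw [ht, sub_mul, div_mul_cancel₀ ω₀ hSpos.ne']; linarith
  have hlow : cmin * Sd ≤ (1 - t) * ∑ n, cu n * ustar n := by
    have : cmin * S ≤ ∑ n, cu n * ustar n := by
      rw [hS, Finset.mul_sum]
      apply Finset.sum_le_sum
      intro n _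
      exact mul_le_mul_of_nonneg_right (hn0 n (mem_univ n)) (hufeas n).1
    calc cmin * Sd = (1 - t) * (cmin * S) := by rw [← h1t]; ring
      _ ≤ (1 - t) * ∑ n, cu n * ustar n :=
          mul_le_mul_of_nonneg_left this (by linarith)
  -- strict upper bound: Σ cd dstar < cmin * Sd
  have hup : ∑ n, cd n * dstar n < cmin * Sd := by
    rw [hSd, Finset.mul_sum]
    apply Finset.sum_lt_sum
    · intro n _
      exact mul_le_mul_of_nonneg_right (hcdlt n).le (hdfeas n).1
    · exact ⟨k0, mem_univ k0, (mul_lt_mul_of_pos_right (hcdlt k0) hk0pos)⟩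
  linarith
end

section
/- If (u⋆, d⋆) is an optimal clearing with net position ω₀ < 0 and there exists a feasible d with Σ d(n) = −ω₀, then u⋆ = 0, i.e., no upward bids are cleared. (Part of Lemma 1 of the paper.) -/
open Finset

/-- In the abstract market clearing with price condition
max c^d < min c^u, if (u⋆, d⋆) is an optimal clearing with net position ω₀ < 0
and the target is attainable by downward bids alone, then no upward bids are
cleared: u⋆ = 0. -/
theorem no_upward_cleared {U D : Type*} [Fintype U] [Fintype D]
    (cu : U → ℝ) (cd : D → ℝ) (umax : U → ℝ) (dmax : D → ℝ)
    (hcu : ∀ n, 0 < cu n) (hcd : ∀ n, 0 < cd n)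
    (humax : ∀ n, 0 ≤ umax n) (hdmax : ∀ n, 0 ≤ dmax n)
    (hprice : ∀ (n : U) (k : D), cd k < cu n)
    (ω₀ : ℝ) (hω₀ : ω₀ < 0)
    (ustar : U → ℝ) (dstar : D → ℝ)
    (hufeas : ∀ n, 0 ≤ ustar n ∧ ustar n ≤ umax n)
    (hdfeas : ∀ n, 0 ≤ dstar n ∧ dstar n ≤ dmax n)
    (hω : ∑ n, ustar n - ∑ n, dstar n = ω₀)
    (hopt : ∀ (u : U → ℝ) (d : D → ℝ),
      (∀ n, 0 ≤ u n ∧ u n ≤ umax n) → (∀ n, 0 ≤ d n ∧ d n ≤ dmax n) →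
      ∑ n, u n - ∑ n, d n = ω₀ →
      ∑ n, cu n * ustar n - ∑ n, cd n * dstar n ≤
        ∑ n, cu n * u n - ∑ n, cd n * d n)
    (hattain : ∃ d : D → ℝ, (∀ n, 0 ≤ d n ∧ d n ≤ dmax n) ∧ ∑ n, d n = -ω₀) :
    ustar = 0 := by
  classical
  by_contra h
  obtain ⟨n, hn⟩ : ∃ n, 0 < ustar n := by
    by_contra hno
    push_neg at hno
    exact h (funext fun m => le_antisymm (hno m) (hufeas m).1)
  have hsumu : 0 ≤ ∑ m, ustar m := Finset.sum_nonneg fun m _ => (hufeas m).1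
  have hsumd : 0 < ∑ m, dstar m := by linarith
  obtain ⟨k, hk⟩ : ∃ k, 0 < dstar k := by
    by_contra hno
    push_neg at hno
    have : ∑ m, dstar m ≤ 0 := Finset.sum_nonpos fun m _ => hno m
    linarith
  set ε := min (ustar n) (dstar k) with hε
  have hε0 : 0 < ε := lt_min hn hk
  have hεu : ε ≤ ustar n := min_le_left _ _
  have hεd : ε ≤ dstar k := min_le_right _ _
  set u' : U → ℝ := fun m => ustar m - if m = n then ε else 0 with hu'
  set d' : D → ℝ := fun m => dstar m - if m = k then ε else 0 with hd'
  have hufeas' : ∀ m, 0 ≤ u' m ∧ u' m ≤ umax m := by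
    intro m
    by_cases hm : m = n
    · subst hm
      simp only [hu', if_pos rfl, if_true, eq_self_iff_true]
      exact ⟨by linarith, by linarith [(hufeas m).2]⟩
    · simp only [hu', if_neg hm, sub_zero]
      exact hufeas m
  have hdfeas' : ∀ m, 0 ≤ d' m ∧ d' m ≤ dmax m := by
    intro m
    by_cases hm : m = k
    · subst hm
      simp only [hd', if_pos rfl, if_true, eq_self_iff_true]
      exact ⟨by linarith, by linarith [(hdfeas m).2]⟩
    · simp only [hd', if_neg hm, sub_zero]
      exact hdfeas m
  have hsu : ∑ m, u' m = ∑ m, ustar m - ε := by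
    simp only [hu']
    rw [Finset.sum_sub_distrib, Finset.sum_ite_eq' Finset.univ n (fun _ => ε)]
    simp
  have hsd : ∑ m, d' m = ∑ m, dstar m - ε := by
    simp only [hd']
    rw [Finset.sum_sub_distrib, Finset.sum_ite_eq' Finset.univ k (fun _ => ε)]
    simp
  have hcsu : ∑ m, cu m * u' m = ∑ m, cu m * ustar m - cu n * ε := by
    have key : ∀ m ∈ Finset.univ,
        cu m * u' m = cu m * ustar m - (if m = n then cu n * ε else 0) := by
      intro m _
      by_cases hm : m = n
      · subst hm; simp [hu']; ring
      · simp only [hu', if_neg hm]; ring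
    rw [Finset.sum_congr rfl key, Finset.sum_sub_distrib,
      Finset.sum_ite_eq' Finset.univ n (fun _ => cu n * ε)]
    simp
  have hcsd : ∑ m, cd m * d' m = ∑ m, cd m * dstar m - cd k * ε := by
    have key : ∀ m ∈ Finset.univ,
        cd m * d' m = cd m * dstar m - (if m = k then cd k * ε else 0) := by
      intro m _
      by_cases hm : m = k
      · subst hm; simp [hd']; ring
      · simp only [hd', if_neg hm]; ring
    rw [Finset.sum_congr rfl key, Finset.sum_sub_distrib,
      Finset.sum_ite_eq' Finset.univ k (fun _ => cd k * ε)]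
    simp
  have hω' : ∑ m, u' m - ∑ m, d' m = ω₀ := by rw [hsu, hsd]; linarith
  have hle := hopt u' d' hufeas' hdfeas' hω'
  rw [hcsu, hcsd] at hle
  have hpr := hprice n k
  nlinarith
end

section
/- If (u⋆, d⋆) is an optimal clearing with net position 0, then u⋆ = 0 and d⋆ = 0. (Part of Lemma 1 of the paper: when the net flexibility position is zero, no bids are cleared.) -/
open Finset

/-- In the abstract market clearing with price condition
max c^d < min c^u, if (u⋆, d⋆) is an optimal clearing with net position 0,
then u⋆ = 0 and d⋆ = 0: no bids are cleared. -/
theorem no_bids_cleared_zero_position {U D : Type*} [Fintype U] [Fintype D]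
    (cu : U → ℝ) (cd : D → ℝ) (umax : U → ℝ) (dmax : D → ℝ)
    (hcu : ∀ n, 0 < cu n) (hcd : ∀ n, 0 < cd n)
    (humax : ∀ n, 0 ≤ umax n) (hdmax : ∀ n, 0 ≤ dmax n)
    (hprice : ∀ (n : U) (k : D), cd k < cu n)
    (ustar : U → ℝ) (dstar : D → ℝ)
    (hufeas : ∀ n, 0 ≤ ustar n ∧ ustar n ≤ umax n)
    (hdfeas : ∀ n, 0 ≤ dstar n ∧ dstar n ≤ dmax n)
    (hω : ∑ n, ustar n - ∑ n, dstar n = 0)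
    (hopt : ∀ (u : U → ℝ) (d : D → ℝ),
      (∀ n, 0 ≤ u n ∧ u n ≤ umax n) → (∀ n, 0 ≤ d n ∧ d n ≤ dmax n) →
      ∑ n, u n - ∑ n, d n = 0 →
      ∑ n, cu n * ustar n - ∑ n, cd n * dstar n ≤
        ∑ n, cu n * u n - ∑ n, cd n * d n) :
    ustar = 0 ∧ dstar = 0 := by
  have h0 := hopt 0 0 (fun n => ⟨le_refl 0, humax n⟩) (fun n => ⟨le_refl 0, hdmax n⟩) (by simp)
  simp only [Pi.zero_apply, mul_zero, Finset.sum_const_zero, sub_zero, sub_self] at h0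
  have hSnn : 0 ≤ ∑ n, ustar n := Finset.sum_nonneg fun n _ => (hufeas n).1
  have hS : ∑ n, ustar n = 0 := by
    by_contra h
    have hSpos : 0 < ∑ n, ustar n := lt_of_le_of_ne hSnn (Ne.symm h)
    have hd : ∑ n, dstar n = ∑ n, ustar n := by linarith
    have hDne : (Finset.univ : Finset D).Nonempty := by
      by_contra hne
      rw [Finset.not_nonempty_iff_eq_empty] at hne
      have : ∑ n, dstar n = 0 := by rw [hne]; simp
      linarith
    obtain ⟨b, -, hb⟩ := Finset.exists_max_image Finset.univ cd hDne
    have hle : ∑ n, cd n * dstar n ≤ cd b * ∑ n, dstar n := by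
      rw [Finset.mul_sum]
      exact Finset.sum_le_sum fun n _ =>
        mul_le_mul_of_nonneg_right (hb n (Finset.mem_univ n)) (hdfeas n).1
    obtain ⟨n0, -, hn0⟩ := Finset.exists_lt_of_sum_lt
      (show ∑ n : U, (0:ℝ) < ∑ n, ustar n by simpa using hSpos)
    have hlt : cd b * ∑ n, ustar n < ∑ n, cu n * ustar n := by
      rw [Finset.mul_sum]
      refine Finset.sum_lt_sum (fun n _ =>
        mul_le_mul_of_nonneg_right (le_of_lt (hprice n b)) (hufeas n).1)
        ⟨n0, Finset.mem_univ n0, mul_lt_mul_of_pos_right (hprice n0 b) hn0⟩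
    rw [hd] at hle
    linarith
  have hdS : ∑ n, dstar n = 0 := by linarith
  have hu : ∀ n ∈ Finset.univ, ustar n = 0 :=
    (Finset.sum_eq_zero_iff_of_nonneg fun n _ => (hufeas n).1).mp hS
  have hdd : ∀ n ∈ Finset.univ, dstar n = 0 :=
    (Finset.sum_eq_zero_iff_of_nonneg fun n _ => (hdfeas n).1).mp hdS
  exact ⟨funext fun n => hu n (Finset.mem_univ n), funext fun n => hdd n (Finset.mem_univ n)⟩
end
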